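/- Let (X,‖·‖,τ) be a sequentially complete Saks space with mixed topology γ, Γ_γ a directed system of continuous seminorms generating γ, and (A,D(A)) a Γ_γ-dissipative linear operator on X. Then λ−A is surjective for some λ>0 if and only if λ−A is surjective for all λ>0; in this case (0,∞) ⊆ ρ_γ(A), i.e. for every λ>0 the map λ−A : D(A)→X is bijective and (λ−A)^{-1} is γ-continuous. -/

import Mathlib

open Filter Topology Set

namespace LumerPhillips

variable {X : Type*}

section Defs

variable [NormedAddCommGroup X] [NormedSpace ℝ X]

/-- A directed set of seminorms. -/
def DirectedSeminorms (Γ : Set (Seminorm ℝ X)) : Prop :=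
  ∀ p ∈ Γ, ∀ q ∈ Γ, ∃ r ∈ Γ, p ≤ r ∧ q ≤ r

/-- `Γ` is a system of `t`-continuous seminorms generating the topology `t`, i.e. `t` is
the locally convex topology induced by the seminorms in `Γ`. -/
def GeneratesTop (Γ : Set (Seminorm ℝ X)) (t : TopologicalSpace X) : Prop :=
  (∀ p ∈ Γ, @Continuous X ℝ t _ p) ∧
    t = ⨅ p : Γ,
      (p : Seminorm ℝ X).toSeminormedAddCommGroup.toUniformSpace.toTopologicalSpace

/-- `Γ` is norming: the norm is the pointwise supremum of the seminorms in `Γ`. -/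
def NormingSeminorms (Γ : Set (Seminorm ℝ X)) : Prop :=
  ∀ x : X, ‖x‖ = ⨆ p : Γ, (p : Seminorm ℝ X) x

/-- `(X,‖·‖,τ)` is a Saks space witnessed by the norming directed system `Γ` of τ-continuous
seminorms generating `τ`; `τ` is a Hausdorff locally convex topology coarser than the norm
topology. -/
def IsSaksSystem (τ : TopologicalSpace X) (Γ : Set (Seminorm ℝ X)) : Prop :=
  @T2Space X τ ∧ @LocallyConvexSpace ℝ X _ _ _ _ τ ∧
    (inferInstance : TopologicalSpace X) ≤ τ ∧
    DirectedSeminorms Γ ∧ GeneratesTop Γ τ ∧ NormingSeminorms Γ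

/-- `t` is a linear (vector space) topology on `X`. -/
def IsLinearTop (t : TopologicalSpace X) : Prop :=
  @IsTopologicalAddGroup X t _ ∧ @ContinuousSMul ℝ X _ _ t

/-- The topologies `t` and `s` agree (as subspace topologies) on every norm-bounded set. -/
def AgreeOnBoundedSets (t s : TopologicalSpace X) : Prop :=
  ∀ S : Set X, Bornology.IsBounded S →
    TopologicalSpace.induced ((↑) : S → X) t = TopologicalSpace.induced ((↑) : S → X) s

/-- `γ` is the mixed topology `γ(‖·‖,τ)`: the finest linear topology that agrees with `τ` on
norm-bounded sets and lies between `τ` and the norm topology. (Recall that in Mathlib's order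
on topologies, `t ≤ s` means `t` is finer than `s`.) -/
def IsMixedTopology (τ γ : TopologicalSpace X) : Prop :=
  (IsLinearTop γ ∧ γ ≤ τ ∧ (inferInstance : TopologicalSpace X) ≤ γ ∧ AgreeOnBoundedSets γ τ) ∧
    ∀ t : TopologicalSpace X, IsLinearTop t → t ≤ τ →
      (inferInstance : TopologicalSpace X) ≤ t → AgreeOnBoundedSets t τ → γ ≤ t

/-- `u` is a Cauchy sequence for the (group) topology `t`. -/
def CauchySeqTop (t : TopologicalSpace X) (u : ℕ → X) : Prop :=
  ∀ V ∈ @nhds X t 0, ∃ N : ℕ, ∀ m ≥ N, ∀ n ≥ N, u m - u n ∈ V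

/-- `(X,t)` is sequentially complete. -/
def SeqCompleteTop (t : TopologicalSpace X) : Prop :=
  ∀ u : ℕ → X, CauchySeqTop t u → ∃ x : X, Filter.Tendsto u atTop (@nhds X t x)

/-- `(X,t)` is complete (every Cauchy filter for the group uniformity of `t` converges). -/
def CompleteTop (t : TopologicalSpace X) : Prop :=
  ∀ F : Filter X, F.NeBot →
    (∀ V ∈ @nhds X t 0, ∃ S ∈ F, ∀ x ∈ S, ∀ y ∈ S, x - y ∈ V) →
    ∃ x : X, F ≤ @nhds X t x

/-- The map `λ - A` on the domain `D` of the linear operator `A`. -/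
def lmap (D : Submodule ℝ X) (A : D →ₗ[ℝ] X) (l : ℝ) : D → X :=
  fun x => l • (x : X) - A x

/-- The operator `(A, D)` is `Γ`-dissipative: `p((λ - A)x) ≥ λ p(x)` for all `λ > 0`,
`x ∈ D` and `p ∈ Γ`. -/
def GammaDissipative (Γ : Set (Seminorm ℝ X)) (D : Submodule ℝ X) (A : D →ₗ[ℝ] X) : Prop :=
  ∀ l : ℝ, 0 < l → ∀ x : D, ∀ p ∈ Γ, l * p (x : X) ≤ p (lmap D A l x)

/-- The range of `λ - A`. -/
def opRange (D : Submodule ℝ X) (A : D →ₗ[ℝ] X) (l : ℝ) : Set X :=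
  Set.range (lmap D A l)

/-- The graph of the operator `(A, D)`. -/
def graphSet (D : Submodule ℝ X) (A : D →ₗ[ℝ] X) : Set (X × X) :=
  {p : X × X | ∃ x : D, p = ((x : X), A x)}

/-- The operator `(A, D)` is `t`-closed (equivalently: its graph is closed for the product
topology, which is the net formulation of closedness). -/
def ClosedOp (t : TopologicalSpace X) (D : Submodule ℝ X) (A : D →ₗ[ℝ] X) : Prop :=
  @IsClosed (X × X) (@instTopologicalSpaceProd X X t t) (graphSet D A)

/-- The operator `(A, D)` is sequentially `t`-closed. -/
def SeqClosedOp (t : TopologicalSpace X) (D : Submodule ℝ X) (A : D →ₗ[ℝ] X) : Prop :=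
  ∀ (u : ℕ → D) (x y : X),
    Filter.Tendsto (fun n => (u n : X)) atTop (@nhds X t x) →
    Filter.Tendsto (fun n => A (u n)) atTop (@nhds X t y) →
    ∃ hx : x ∈ D, A ⟨x, hx⟩ = y

/-- `(A', D')` is an extension of `(A, D)`. -/
def ExtensionOp (D : Submodule ℝ X) (A : D →ₗ[ℝ] X)
    (D' : Submodule ℝ X) (A' : D' →ₗ[ℝ] X) : Prop :=
  ∃ h : D ≤ D', ∀ x : D, A' ⟨(x : X), h x.2⟩ = A x

/-- `(A', D')` is the `t`-closure of `(A, D)`: the smallest `t`-closed extension. -/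
def IsClosureOp (t : TopologicalSpace X) (D : Submodule ℝ X) (A : D →ₗ[ℝ] X)
    (D' : Submodule ℝ X) (A' : D' →ₗ[ℝ] X) : Prop :=
  ExtensionOp D A D' A' ∧ ClosedOp t D' A' ∧
    ∀ (D'' : Submodule ℝ X) (A'' : D'' →ₗ[ℝ] X),
      ExtensionOp D A D'' A'' → ClosedOp t D'' A'' → ExtensionOp D' A' D'' A''

/-- `T` is a semigroup of linear operators which is strongly continuous for the topology `t`. -/
def IsSemigroupOn (t : TopologicalSpace X) (T : ℝ → X →ₗ[ℝ] X) : Prop :=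
  T 0 = LinearMap.id ∧ (∀ s u : ℝ, 0 ≤ s → 0 ≤ u → T (s + u) = (T s).comp (T u)) ∧
    ∀ x : X, @ContinuousOn ℝ X _ t (fun s => T s x) (Set.Ici 0)

/-- `T` is equicontinuous with respect to the system of seminorms `Γ`. -/
def EquicontOn (Γ : Set (Seminorm ℝ X)) (T : ℝ → X →ₗ[ℝ] X) : Prop :=
  ∀ p ∈ Γ, ∃ q ∈ Γ, ∃ C : ℝ, 0 ≤ C ∧ ∀ s : ℝ, 0 ≤ s → ∀ x : X, p (T s x) ≤ C * q x

/-- `T` is a contraction semigroup: `‖T(t)‖ ≤ 1` for all `t ≥ 0`. -/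
def ContractionSG (T : ℝ → X →ₗ[ℝ] X) : Prop :=
  ∀ s : ℝ, 0 ≤ s → ∀ x : X, ‖T s x‖ ≤ ‖x‖

/-- `T` is `(‖·‖,τ)`-equitight with respect to the system of seminorms `Γτ` generating `τ`. -/
def EquitightSG (Γτ : Set (Seminorm ℝ X)) (T : ℝ → X →ₗ[ℝ] X) : Prop :=
  ∀ ε : ℝ, 0 < ε → ∀ p ∈ Γτ, ∃ q ∈ Γτ, ∃ C : ℝ, 0 ≤ C ∧
    ∀ s : ℝ, 0 ≤ s → ∀ x : X, p (T s x) ≤ C * q x + ε * ‖x‖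

/-- `T` is a `τ`-bi-continuous semigroup. -/
def IsBiContSG (τ : TopologicalSpace X) (T : ℝ → X →ₗ[ℝ] X) : Prop :=
  IsSemigroupOn τ T ∧
    (∃ M : ℝ, 1 ≤ M ∧ ∃ ω : ℝ, ∀ s : ℝ, 0 ≤ s → ∀ x : X,
      ‖T s x‖ ≤ M * Real.exp (ω * s) * ‖x‖) ∧
    ∀ (x : ℕ → X) (x₀ : X), (∃ C : ℝ, ∀ n, ‖x n‖ ≤ C) →
      Filter.Tendsto x atTop (@nhds X τ x₀) →
      ∀ t₀ : ℝ, 0 < t₀ → ∀ V ∈ @nhds X τ 0,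
        ∃ N : ℕ, ∀ n ≥ N, ∀ s ∈ Set.Icc (0 : ℝ) t₀, T s (x n - x₀) ∈ V

/-- `(A, D)` is the generator of the `τ`-bi-continuous semigroup `T`. -/
def IsGeneratorBi (τ : TopologicalSpace X) (T : ℝ → X →ₗ[ℝ] X)
    (D : Submodule ℝ X) (A : D →ₗ[ℝ] X) : Prop :=
  (∀ x : X, x ∈ D ↔
      ((∃ y : X, Filter.Tendsto (fun s : ℝ => s⁻¹ • (T s x - x)) (𝓝[>] (0 : ℝ))
          (@nhds X τ y)) ∧
        ∃ C : ℝ, ∀ s ∈ Set.Ioc (0 : ℝ) 1, ‖T s x - x‖ ≤ C * s)) ∧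
    ∀ x : D, Filter.Tendsto (fun s : ℝ => s⁻¹ • (T s (x : X) - (x : X))) (𝓝[>] (0 : ℝ))
      (@nhds X τ (A x))

/-- `(A, D)` is the generator of the `t`-strongly continuous semigroup `T` (locally convex
setting). -/
def IsGeneratorLC (t : TopologicalSpace X) (T : ℝ → X →ₗ[ℝ] X)
    (D : Submodule ℝ X) (A : D →ₗ[ℝ] X) : Prop :=
  (∀ x : X, x ∈ D ↔
      ∃ y : X, Filter.Tendsto (fun s : ℝ => s⁻¹ • (T s x - x)) (𝓝[>] (0 : ℝ)) (@nhds X t y)) ∧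
    ∀ x : D, Filter.Tendsto (fun s : ℝ => s⁻¹ • (T s (x : X) - (x : X))) (𝓝[>] (0 : ℝ))
      (@nhds X t (A x))

/-- `D` is bi-dense in `X`: every point is the `τ`-limit of a norm-bounded sequence in `D`. -/
def BiDenselyDefined (τ : TopologicalSpace X) (D : Submodule ℝ X) : Prop :=
  ∀ x : X, ∃ u : ℕ → D, (∃ C : ℝ, ∀ n, ‖(u n : X)‖ ≤ C) ∧
    Filter.Tendsto (fun n => (u n : X)) atTop (@nhds X τ x)

/-- The seminorms `|||x||| = sup_n p_n(x) a_n` with `(p_n) ⊆ Γτ` and `(a_n)` a non-negative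
real null sequence; they generate the submixed topology `γ_s`. -/
def SubmixedSet (Γτ : Set (Seminorm ℝ X)) : Set (Seminorm ℝ X) :=
  {q : Seminorm ℝ X | ∃ (pn : ℕ → Seminorm ℝ X) (an : ℕ → ℝ),
      (∀ n, pn n ∈ Γτ) ∧ (∀ n, 0 ≤ an n) ∧ Filter.Tendsto an atTop (nhds 0) ∧
      ∀ x : X, q x = ⨆ n : ℕ, pn n x * an n}

/-- The subfamily of submixed seminorms with coefficients `0 ≤ a_n ≤ 1`. -/
def SubmixedSetOne (Γτ : Set (Seminorm ℝ X)) : Set (Seminorm ℝ X) :=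
  {q : Seminorm ℝ X | ∃ (pn : ℕ → Seminorm ℝ X) (an : ℕ → ℝ),
      (∀ n, pn n ∈ Γτ) ∧ (∀ n, 0 ≤ an n ∧ an n ≤ 1) ∧ Filter.Tendsto an atTop (nhds 0) ∧
      ∀ x : X, q x = ⨆ n : ℕ, pn n x * an n}

/-- The dual norm of a linear functional (as the supremum over the closed unit ball). -/
noncomputable def dualNormF (f : X →ₗ[ℝ] ℝ) : ℝ :=
  ⨆ x : {x : X // ‖x‖ ≤ 1}, |f x|

/-- The weak topology `σ(X, (X,t)')`. -/
def weakTopOf (t : TopologicalSpace X) : TopologicalSpace X :=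
  ⨅ f : {f : X →ₗ[ℝ] ℝ // @Continuous X ℝ t _ f},
    TopologicalSpace.induced (⇑f.1) inferInstance

/-- `(X,t)` is semi-reflexive: every `t`-(von Neumann-)bounded set is relatively compact
for the weak topology `σ(X,(X,t)')`. -/
def SemiReflexiveTop (t : TopologicalSpace X) : Prop :=
  ∀ S : Set X, @Bornology.IsVonNBounded ℝ X _ _ _ t S →
    @IsCompact X (weakTopOf t) (@closure X (weakTopOf t) S)

/-- A set is sequentially open for the topology `t`. -/
def SeqOpenSet (t : TopologicalSpace X) (s : Set X) : Prop :=
  ∀ (u : ℕ → X) (x : X), x ∈ s → Filter.Tendsto u atTop (@nhds X t x) →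
    ∀ᶠ n in atTop, u n ∈ s

/-- `(X,t)` is C-sequential: every convex sequentially open set is open. -/
def CSequentialTop (t : TopologicalSpace X) : Prop :=
  ∀ s : Set X, Convex ℝ s → SeqOpenSet t s → @IsOpen X t s

end Defs



namespace Statements

open LumerPhillips Filter Topology Set

variable {X : Type*}


section Aux

variable {E : Type*} [AddCommGroup E] [Module ℝ E]

/-- The topology induced by a single seminorm. -/
def tpx (p : Seminorm ℝ E) : TopologicalSpace E :=
  p.toSeminormedAddCommGroup.toUniformSpace.toTopologicalSpace

lemma tendsto_tpx (p : Seminorm ℝ E) {ι : Type*} {F : Filter ι} {u : ι → E} {x : E} :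
    Tendsto u F (@nhds E (tpx p) x) ↔ Tendsto (fun n => p (u n - x)) F (𝓝 0) := by
  letI := p.toSeminormedAddCommGroup
  exact tendsto_iff_norm_sub_tendsto_zero

lemma mem_nhds_tpx (p : Seminorm ℝ E) {x : E} {V : Set E} :
    V ∈ @nhds E (tpx p) x ↔ ∃ ε > 0, ∀ y, p (y - x) < ε → y ∈ V := by
  letI := p.toSeminormedAddCommGroup
  refine Metric.mem_nhds_iff.trans ?_
  constructor
  · rintro ⟨ε, hε, hb⟩
    exact ⟨ε, hε, fun y hy => hb (show dist y x < ε by rw [dist_eq_norm_sub]; exact hy)⟩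
  · rintro ⟨ε, hε, hb⟩
    exact ⟨ε, hε, fun y hy => hb y (by rw [Metric.mem_ball, dist_eq_norm_sub] at hy; exact hy)⟩

lemma cont_tpx (p : Seminorm ℝ E) {g : E →ₗ[ℝ] E} {C : ℝ}
    (h : ∀ x, p (g x) ≤ C * p x) : @Continuous E E (tpx p) (tpx p) g := by
  letI := p.toSeminormedAddCommGroup
  have hl : LipschitzWith (Real.toNNReal C) g := by
    apply LipschitzWith.of_dist_le_mul
    intro a b
    have h1 : p (g a - g b) ≤ C * p (a - b) := by
      rw [← map_sub]; exact h _
    have h2 : (C : ℝ) ≤ Real.toNNReal C := by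
      rw [Real.coe_toNNReal']; exact le_max_left _ _
    calc dist (g a) (g b) = p (g a - g b) := by rw [dist_eq_norm_sub]; rfl
      _ ≤ C * p (a - b) := h1
      _ ≤ Real.toNNReal C * p (a - b) :=
        mul_le_mul_of_nonneg_right h2 (apply_nonneg p _)
      _ = Real.toNNReal C * dist a b := by rw [dist_eq_norm_sub]; rfl
  exact hl.continuous

lemma seminorm_sum_le {ι : Type*} (p : Seminorm ℝ E) (s : Finset ι) (f : ι → E) :
    p (∑ i ∈ s, f i) ≤ ∑ i ∈ s, p (f i) := by
  letI := p.toSeminormedAddCommGroup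
  exact norm_sum_le s f

lemma tendsto_gamma_iff {Γ : Set (Seminorm ℝ E)} {γ : TopologicalSpace E}
    (hγ : γ = ⨅ p : Γ, tpx (p : Seminorm ℝ E)) {ι : Type*} {F : Filter ι}
    {u : ι → E} {x : E} :
    Tendsto u F (@nhds E γ x) ↔
      ∀ p : Γ, Tendsto (fun n => (p : Seminorm ℝ E) (u n - x)) F (𝓝 0) := by
  subst hγ
  rw [_root_.nhds_iInf, tendsto_iInf]
  exact forall_congr' fun p => tendsto_tpx _

lemma cauchy_gamma {X : Type*} [NormedAddCommGroup X] [NormedSpace ℝ X]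
    {Γ : Set (Seminorm ℝ X)} {γ : TopologicalSpace X}
    (hγ : γ = ⨅ p : Γ, tpx (p : Seminorm ℝ X)) {u : ℕ → X}
    (h : ∀ p ∈ Γ, ∀ ε > 0, ∃ N, ∀ m ≥ N, ∀ n ≥ N, p (u m - u n) < ε) :
    CauchySeqTop γ u := by
  intro V hV
  rw [hγ, _root_.nhds_iInf] at hV
  obtain ⟨I, hIfin, W, hW, rfl⟩ := Filter.mem_iInf.mp hV
  haveI := hIfin.fintype
  have key : ∀ i : I, ∃ N, ∀ m ≥ N, ∀ n ≥ N, u m - u n ∈ W i := by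
    intro i
    obtain ⟨ε, hε, hb⟩ := (mem_nhds_tpx _).mp (hW i)
    obtain ⟨N, hN⟩ := h ((i : Γ) : Seminorm ℝ X) (i : Γ).2 ε hε
    exact ⟨N, fun m hm n hn => hb _ (by simpa using hN m hm n hn)⟩
  choose N hN using key
  refine ⟨Finset.univ.sup N, fun m hm n hn => Set.mem_iInter.mpr fun i => ?_⟩
  exact hN i m (le_trans (Finset.le_sup (Finset.mem_univ i)) hm) n
    (le_trans (Finset.le_sup (Finset.mem_univ i)) hn)

lemma eq_zero_of_seminorms {X : Type*} [AddCommGroup X] [Module ℝ X]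
    {Γ : Set (Seminorm ℝ X)} {γ : TopologicalSpace X}
    (hγ : γ = ⨅ p : Γ, tpx (p : Seminorm ℝ X)) (ht2 : @T2Space X γ)
    {x : X} (hx : ∀ p ∈ Γ, p x = 0) : x = 0 := by
  by_contra hne
  obtain ⟨U, V, hU, hV, hxU, h0V, hUV⟩ := ht2.t2 hne
  have hUn : U ∈ @nhds X γ x := hU.mem_nhds hxU
  rw [hγ, _root_.nhds_iInf] at hUn
  obtain ⟨I, hIfin, W, hW, hUeq⟩ := Filter.mem_iInf.mp hUn
  have h0U : (0 : X) ∈ U := by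
    rw [hUeq]
    refine Set.mem_iInter.mpr fun i => ?_
    obtain ⟨ε, hε, hb⟩ := (mem_nhds_tpx _).mp (hW i)
    apply hb
    rw [zero_sub, map_neg_eq_map, hx _ ((i : Γ)).2]
    exact hε
  exact Set.disjoint_left.mp hUV h0U h0V

end Aux

theorem statement7 [NormedAddCommGroup X] [NormedSpace ℝ X] [CompleteSpace X]
    (τ γ : TopologicalSpace X) (Γτ Γγ : Set (Seminorm ℝ X))
    (hSaks : IsSaksSystem τ Γτ) (hmixed : IsMixedTopology τ γ) (hseq : SeqCompleteTop γ)
    (hdir : DirectedSeminorms Γγ) (hgen : GeneratesTop Γγ γ)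
    (D : Submodule ℝ X) (A : D →ₗ[ℝ] X)
    (hdiss : GammaDissipative Γγ D A) :
    ((∃ l : ℝ, 0 < l ∧ Function.Surjective (lmap D A l)) ↔
        ∀ l : ℝ, 0 < l → Function.Surjective (lmap D A l)) ∧
      ((∃ l : ℝ, 0 < l ∧ Function.Surjective (lmap D A l)) →
        ∀ l : ℝ, 0 < l → Function.Bijective (lmap D A l) ∧
          ∃ g : X → X, @Continuous X X γ γ g ∧ (∀ x : D, g (lmap D A l x) = (x : X)) ∧
            ∀ y : X, ∃ hy : g y ∈ D, lmap D A l ⟨g y, hy⟩ = y) := by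
  -- basic setup
  have hγ : γ = ⨅ p : Γγ, tpx (p : Seminorm ℝ X) := hgen.2
  have ht2 : @T2Space X γ := t2Space_antitone hmixed.1.2.1 hSaks.1
  -- the operator as a linear map
  set L : ℝ → (D →ₗ[ℝ] X) := fun l => l • D.subtype - A with hL
  have lmap_eq : ∀ l : ℝ, lmap D A l = ⇑(L l) := by
    intro l; funext x
    simp [lmap, hL]
  -- injectivity
  have hinj : ∀ l : ℝ, 0 < l → Function.Injective (lmap D A l) := by
    intro l hl a b hab
    have h0 : lmap D A l (a - b) = 0 := by
      rw [lmap_eq] at hab ⊢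
      rw [map_sub, hab, sub_self]
    have hz : ∀ p ∈ Γγ, p ((a - b : D) : X) = 0 := by
      intro p hp
      have hd := hdiss l hl (a - b) p hp
      rw [h0, map_zero] at hd
      nlinarith [apply_nonneg p ((a - b : D) : X)]
    have hab0 := eq_zero_of_seminorms hγ ht2 hz
    rw [Submodule.coe_sub, sub_eq_zero] at hab0
    exact Subtype.ext hab0
  -- resolvent package
  have hres : ∀ l : ℝ, 0 < l → Function.Surjective (lmap D A l) →
      ∃ R : X →ₗ[ℝ] X, (∀ y : X, ∃ hy : R y ∈ D, lmap D A l ⟨R y, hy⟩ = y) ∧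
        (∀ x : D, R (lmap D A l x) = (x : X)) ∧
        (∀ p ∈ Γγ, ∀ y : X, p (R y) ≤ l⁻¹ * p y) := by
    intro l hl hs
    have hbij : Function.Bijective ⇑(L l) := by
      rw [← lmap_eq]; exact ⟨hinj l hl, hs⟩
    let e := LinearEquiv.ofBijective (L l) hbij
    have he : ∀ y : X, lmap D A l (e.symm y) = y := by
      intro y
      rw [lmap_eq]
      show (L l) (e.symm y) = y
      rw [show (L l) (e.symm y) = e (e.symm y) from rfl, e.apply_symm_apply]
    refine ⟨D.subtype.comp e.symm.toLinearMap, ?_, ?_, ?_⟩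
    · intro y
      refine ⟨(e.symm y).2, ?_⟩
      rw [show (⟨(D.subtype.comp e.symm.toLinearMap) y, (e.symm y).2⟩ : D) = e.symm y from rfl]
      exact he y
    · intro x
      show ((e.symm (lmap D A l x) : D) : X) = (x : X)
      rw [lmap_eq]
      rw [show (L l) x = e x from rfl, e.symm_apply_apply]
    · intro p hp y
      have h1 := hdiss l hl (e.symm y) p hp
      rw [he y] at h1
      show p ((e.symm y : D) : X) ≤ l⁻¹ * p y
      have h2 := mul_le_mul_of_nonneg_left h1 (inv_nonneg.mpr hl.le)
      rwa [← mul_assoc, inv_mul_cancel₀ hl.ne', one_mul] at h2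
  -- continuity of seminorm-bounded linear maps in γ
  have hRcont : ∀ (R : X →ₗ[ℝ] X) (C : ℝ),
      (∀ p ∈ Γγ, ∀ y : X, p (R y) ≤ C * p y) → @Continuous X X γ γ ⇑R := by
    intro R C h
    rw [hγ]
    rw [continuous_iInf_rng]
    intro p
    exact continuous_le_dom (iInf_le _ p) (cont_tpx (p : Seminorm ℝ X) (h _ p.2))
  -- extension of surjectivity by Neumann series
  have hext : ∀ l₀ : ℝ, 0 < l₀ → Function.Surjective (lmap D A l₀) →
      ∀ l : ℝ, 0 < l → l < 2 * l₀ → Function.Surjective (lmap D A l) := by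
    intro l₀ h0 hs l hl hll
    obtain ⟨R, hR1, hR2, hR3⟩ := hres l₀ h0 hs
    set c : ℝ := l - l₀ with hc
    have hcabs : |c| < l₀ := abs_lt.mpr ⟨by linarith, by linarith⟩
    set r : ℝ := |c| / l₀ with hr
    have hr0 : 0 ≤ r := div_nonneg (abs_nonneg _) h0.le
    have hr1 : r < 1 := (div_lt_one h0).mpr hcabs
    intro y
    set f : X → X := fun z => y + (-c) • R z with hf
    set u : ℕ → X := fun n => f^[n] y with hu
    have hstep : ∀ n, u (n + 1) = f (u n) := fun n => Function.iterate_succ_apply' f n y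
    have hcontr : ∀ p ∈ Γγ, ∀ a b : X, p (f a - f b) ≤ r * p (a - b) := by
      intro p hp a b
      have h1 : f a - f b = (-c) • (R (a - b)) := by
        rw [map_sub, smul_sub, hf]; exact add_sub_add_left_eq_sub _ _ _
      rw [h1, map_smul_eq_mul, Real.norm_eq_abs, abs_neg]
      calc |c| * p (R (a - b)) ≤ |c| * (l₀⁻¹ * p (a - b)) :=
            mul_le_mul_of_nonneg_left (hR3 p hp _) (abs_nonneg _)
        _ = r * p (a - b) := by rw [hr]; ring
    have hdiff : ∀ p ∈ Γγ, ∀ n, p (u (n + 1) - u n) ≤ r ^ n * p (u 1 - u 0) := by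
      intro p hp n
      induction n with
      | zero => simp
      | succ n ih =>
        rw [show u (n + 1 + 1) - u (n + 1) = f (u (n + 1)) - f (u n) by
          rw [hstep (n + 1), hstep n]]
        calc p (f (u (n + 1)) - f (u n)) ≤ r * p (u (n + 1) - u n) := hcontr p hp _ _
          _ ≤ r * (r ^ n * p (u 1 - u 0)) := mul_le_mul_of_nonneg_left ih hr0
          _ = r ^ (n + 1) * p (u 1 - u 0) := by ring
    -- Cauchy in every seminorm
    have hgeom : CauchySeq (fun n => ∑ i ∈ Finset.range n, r ^ i) :=
      ((summable_geometric_of_lt_one hr0 hr1).hasSum.tendsto_sum_nat).cauchySeq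
    have hcauchy_p : ∀ p ∈ Γγ, ∀ ε > 0, ∃ N, ∀ m ≥ N, ∀ n ≥ N, p (u m - u n) < ε := by
      intro p hp ε hε
      set K := p (u 1 - u 0) with hK
      have hK0 : 0 ≤ K := apply_nonneg _ _
      have hbound : ∀ n m : ℕ, n ≤ m →
          p (u m - u n) ≤ (∑ i ∈ Finset.Ico n m, r ^ i) * K := by
        intro n m hnm
        induction m, hnm using Nat.le_induction with
        | base => simp
        | succ m hm ih =>
          have hsplit : u (m + 1) - u n = (u (m + 1) - u m) + (u m - u n) := by abel
          calc p (u (m + 1) - u n) ≤ p (u (m + 1) - u m) + p (u m - u n) := by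
                rw [hsplit]; exact map_add_le_add p _ _
            _ ≤ r ^ m * K + (∑ i ∈ Finset.Ico n m, r ^ i) * K :=
              add_le_add (hdiff p hp m) ih
            _ = (∑ i ∈ Finset.Ico n (m + 1), r ^ i) * K := by
              rw [Finset.sum_Ico_succ_top hm]; ring
      obtain ⟨N, hNc⟩ := Metric.cauchySeq_iff.mp hgeom (ε / (K + 1)) (by positivity)
      have hfin : ∀ m n : ℕ, n ≤ m → N ≤ m → N ≤ n → p (u m - u n) < ε := by
        intro m n hnm hm hn
        have h1 := hbound n m hnm
        have h2 : (∑ i ∈ Finset.Ico n m, r ^ i) ≤ ε / (K + 1) := by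
          rw [Finset.sum_Ico_eq_sub _ hnm]
          have := hNc m hm n hn
          rw [Real.dist_eq] at this
          calc (∑ i ∈ Finset.range m, r ^ i) - ∑ i ∈ Finset.range n, r ^ i
              ≤ |(∑ i ∈ Finset.range m, r ^ i) - ∑ i ∈ Finset.range n, r ^ i| := le_abs_self _
            _ ≤ ε / (K + 1) := this.le
        have h3 : (∑ i ∈ Finset.Ico n m, r ^ i) * K ≤ (ε / (K + 1)) * K :=
          mul_le_mul_of_nonneg_right h2 hK0
        have h4 : (ε / (K + 1)) * K < ε := by
          rw [div_mul_eq_mul_div, div_lt_iff₀ (by positivity : (0:ℝ) < K + 1)]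
          nlinarith
        linarith
      refine ⟨N, fun m hm n hn => ?_⟩
      rcases le_total n m with h | h
      · exact hfin m n h hm hn
      · rw [show u m - u n = -(u n - u m) by abel, map_neg_eq_map]
        exact hfin n m h hn hm
    obtain ⟨z, hz⟩ := hseq u (cauchy_gamma hγ hcauchy_p)
    -- fixed point equation
    have hz1 : Tendsto (fun n => u (n + 1)) atTop (@nhds X γ z) :=
      hz.comp (tendsto_add_atTop_nat 1)
    have hz2 : Tendsto (fun n => f (u n)) atTop (@nhds X γ (f z)) := by
      rw [tendsto_gamma_iff hγ] at hz ⊢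
      intro p
      refine squeeze_zero (fun n => apply_nonneg _ _)
        (fun n => hcontr (p : Seminorm ℝ X) p.2 (u n) z) ?_
      simpa using (hz p).const_mul r
    have hfix : z = f z := by
      haveI : (atTop : Filter ℕ).NeBot := atTop_neBot
      refine @tendsto_nhds_unique X ℕ γ ht2 (fun n => u (n + 1)) atTop z (f z) _ hz1 ?_
      simpa only [hstep] using hz2
    obtain ⟨hmem, heq⟩ := hR1 z
    refine ⟨⟨R z, hmem⟩, ?_⟩
    have hsplit : lmap D A l (⟨R z, hmem⟩ : D) =
        lmap D A l₀ (⟨R z, hmem⟩ : D) + c • (R z) := by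
      simp only [lmap, hc]
      rw [sub_smul]; abel
    rw [hsplit, heq]
    nth_rewrite 1 [hfix]
    show (y + (-c) • R z) + c • R z = y
    rw [neg_smul]
    abel
  -- bootstrap to all positive reals
  have hall : (∃ l : ℝ, 0 < l ∧ Function.Surjective (lmap D A l)) →
      ∀ l : ℝ, 0 < l → Function.Surjective (lmap D A l) := by
    rintro ⟨l₀, h0, hs⟩ l hl
    have hpow : ∀ n : ℕ, Function.Surjective (lmap D A ((3/2) ^ n * l₀)) := by
      intro n
      induction n with
      | zero => simpa using hs
      | succ n ih =>
        have hp : (0:ℝ) < (3/2) ^ n := pow_pos (by norm_num) n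
        exact hext _ (by positivity) ih _ (by positivity)
          (by rw [pow_succ]; nlinarith)
    obtain ⟨n, hn2⟩ := pow_unbounded_of_one_lt (l / l₀) (by norm_num : (1:ℝ) < 3/2)
    have hp : (0:ℝ) < (3/2) ^ n := pow_pos (by norm_num) n
    rw [div_lt_iff₀ h0] at hn2
    exact hext ((3/2) ^ n * l₀) (by positivity) (hpow n) l hl (by nlinarith)
  -- conclusion
  refine ⟨⟨hall, fun h => ⟨1, one_pos, h 1 one_pos⟩⟩, ?_⟩
  intro hex l hl
  have hs := hall hex l hl
  obtain ⟨R, hR1, hR2, hR3⟩ := hres l hl hs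
  exact ⟨⟨hinj l hl, hs⟩, ⟨⇑R, hRcont R l⁻¹ hR3, hR2, hR1⟩⟩

end Statements
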